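/- A linear functional l on a Riesz space X is a Riesz homomorphism if and only if l is positive and its kernel is a Riesz subspace (assuming l ≠ 0), and in that case the kernel is also a Grothendieck subspace. -/

import Mathlib

variable {X : Type*} [Lattice X] [AddCommGroup X]
  [CovariantClass X X (· + ·) (· ≤ ·)] [Module ℝ X] [PosSMulMono ℝ X]

/-- A Grothendieck subspace: closed under `x ⊔ y ⊔ 0 + x ⊓ y ⊓ 0`. -/
def IsGrothendieckSubspace (H : Submodule ℝ X) : Prop :=
  ∀ x ∈ H, ∀ y ∈ H, x ⊔ y ⊔ 0 + x ⊓ y ⊓ 0 ∈ H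

/-- A Riesz subspace: closed under the lattice operations. -/
def IsRieszSubspace (H : Submodule ℝ X) : Prop :=
  ∀ x ∈ H, ∀ y ∈ H, x ⊔ y ∈ H ∧ x ⊓ y ∈ H

/-- A Riesz homomorphism: a linear map preserving finite suprema. -/
def IsRieszHom (f : X →ₗ[ℝ] ℝ) : Prop :=
  ∀ x y : X, f (x ⊔ y) = f x ⊔ f y

/-- A positive linear functional. -/
def IsPositive (f : X →ₗ[ℝ] ℝ) : Prop :=
  ∀ x : X, 0 ≤ x → 0 ≤ f x

/-- `p` is the positive part of the order bounded functional `l`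
(so `l₋ = p - l` and `|l| = p + (p - l)`). -/
def IsPosPartOf (l p : X →ₗ[ℝ] ℝ) : Prop :=
  IsPositive p ∧ IsPositive (p - l) ∧
    ∀ x : X, 0 ≤ x → p x = sSup {r : ℝ | ∃ y : X, 0 ≤ y ∧ y ≤ x ∧ l y = r}

theorem riesz_hom_iff_positive_and_riesz_kernel (l : X →ₗ[ℝ] ℝ) (hl0 : l ≠ 0) :
    (IsRieszHom l ↔ IsPositive l ∧ IsRieszSubspace (LinearMap.ker l)) ∧
      (IsRieszHom l → IsGrothendieckSubspace (LinearMap.ker l)) := by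
  -- auxiliary real identity
  have raux : ∀ a b : ℝ, (a - b) ⊔ 0 + b = a ⊔ b := by
    intro a b
    rcases le_total a b with h|h
    · rw [sup_eq_right.mpr (by linarith), sup_eq_right.mpr h]; ring
    · rw [sup_eq_left.mpr (by linarith), sup_eq_left.mpr h]; ring
  -- monotonicity from positivity
  have mono : IsPositive l → ∀ a b : X, a ≤ b → l a ≤ l b := by
    intro hp a b hab
    have := hp (b - a) (sub_nonneg.2 hab)
    rw [map_sub] at this; linarith
  -- forward: Riesz hom → positive
  have hRpos : IsRieszHom l → IsPositive l := by
    intro hR x hx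
    have h1 : l (x ⊔ 0) = l x ⊔ l 0 := hR x 0
    rw [map_zero, sup_eq_left.mpr hx] at h1
    exact h1 ▸ le_sup_right
  -- forward: Riesz hom → kernel is a Riesz subspace
  have hRker : IsRieszHom l → IsRieszSubspace (LinearMap.ker l) := by
    intro hR x hx y hy
    have hx' : l x = 0 := hx
    have hy' : l y = 0 := hy
    have hs : l (x ⊔ y) = 0 := by rw [hR x y, hx', hy']; simp
    have hi : l (x ⊓ y) = 0 := by
      have h1 := congrArg l (inf_add_sup x y)
      rw [map_add, map_add, hs, hx', hy'] at h1
      linarith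
    exact ⟨LinearMap.mem_ker.mpr hs, LinearMap.mem_ker.mpr hi⟩
  constructor
  · constructor
    · intro hR
      exact ⟨hRpos hR, hRker hR⟩
    · rintro ⟨hpos, hker⟩
      -- find e ≥ 0 with l e = 1
      obtain ⟨z, hz⟩ : ∃ z, l z ≠ 0 := by
        by_contra h
        push_neg at h
        exact hl0 (LinearMap.ext fun x => by simp [h x])
      obtain ⟨u, hu0, hu⟩ : ∃ u : X, 0 ≤ u ∧ 0 < l u := by
        have h1 : 0 ≤ l (z ⊔ 0) := hpos _ le_sup_right
        have h2 : 0 ≤ l (-z ⊔ 0) := hpos _ le_sup_right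
        have h3 : l (z ⊔ 0) - l (-z ⊔ 0) = l z := by
          rw [← map_sub]
          congr 1
          exact posPart_sub_negPart z
        rcases lt_or_ge 0 (l (z ⊔ 0)) with h|h
        · exact ⟨z ⊔ 0, le_sup_right, h⟩
        · refine ⟨-z ⊔ 0, le_sup_right, ?_⟩
          rcases lt_or_ge 0 (l (-z ⊔ 0)) with h'|h'
          · exact h'
          · exfalso; apply hz; linarith
      set e : X := (l u)⁻¹ • u with he_def
      have he0 : 0 ≤ e := smul_nonneg (inv_nonneg.mpr hu.le) hu0
      have hle : l e = 1 := by
        rw [he_def, map_smul, smul_eq_mul, inv_mul_cancel₀ hu.ne']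
      -- key: l (x ⊔ 0) = l x ⊔ 0
      have key : ∀ x : X, l (x ⊔ 0) = l x ⊔ 0 := by
        intro x
        set k : X := x - l x • e with hk_def
        have hkl : l k = 0 := by
          rw [hk_def, map_sub, map_smul, smul_eq_mul, hle, mul_one, sub_self]
        have hkmem : k ∈ LinearMap.ker l := LinearMap.mem_ker.mpr hkl
        have h0mem : (0 : X) ∈ LinearMap.ker l := (LinearMap.ker l).zero_mem
        have hksup : l (k ⊔ 0) = 0 := (hker k hkmem 0 h0mem).1
        have hxk : x = k + l x • e := by rw [hk_def]; abel
        apply le_antisymm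
        · rcases le_or_gt 0 (l x) with h|h
          · have hb : x ⊔ 0 ≤ k ⊔ 0 + l x • e := by
              apply sup_le
              · calc x = k + l x • e := hxk
                  _ ≤ k ⊔ 0 + l x • e := add_le_add_left le_sup_left _
              · exact add_nonneg le_sup_right (smul_nonneg h he0)
            have := mono hpos _ _ hb
            rw [map_add, hksup, map_smul, smul_eq_mul, hle, mul_one, zero_add] at this
            calc l (x ⊔ 0) ≤ l x := this
              _ ≤ l x ⊔ 0 := le_sup_left
          · have hsm : l x • e ≤ 0 := by
              have h1 : 0 ≤ (-(l x)) • e := smul_nonneg (by linarith) he0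
              rw [neg_smul] at h1
              exact neg_nonneg.mp h1
            have hb : x ⊔ 0 ≤ k ⊔ 0 := by
              apply sup_le
              · calc x = k + l x • e := hxk
                  _ ≤ k + 0 := add_le_add_right hsm _
                  _ = k := add_zero k
                  _ ≤ k ⊔ 0 := le_sup_left
              · exact le_sup_right
            have := mono hpos _ _ hb
            rw [hksup] at this
            calc l (x ⊔ 0) ≤ 0 := this
              _ ≤ l x ⊔ 0 := le_sup_right
        · apply sup_le
          · exact mono hpos _ _ le_sup_left
          · exact hpos _ le_sup_right
      -- conclude Riesz hom
      intro x y
      have h1 : x ⊔ y = (x - y) ⊔ 0 + y := by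
        rw [sup_add, sub_add_cancel, zero_add]
      rw [h1, map_add, key, map_sub, raux]
  · intro hR
    have hker := hRker hR
    intro x hx y hy
    have h0 : (0 : X) ∈ LinearMap.ker l := (LinearMap.ker l).zero_mem
    have hs : x ⊔ y ∈ LinearMap.ker l := (hker x hx y hy).1
    have hi : x ⊓ y ∈ LinearMap.ker l := (hker x hx y hy).2
    exact (LinearMap.ker l).add_mem (hker _ hs 0 h0).1 (hker _ hi 0 h0).2
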